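/- Every subnormalized complex square matrix is the average of two unitaries: for any matrix M with ‖M‖∞ ≤ 1 over a finite index type, there exist unitary matrices U₁ and U₂ of the same size such that M = (U₁ + U₂)/2. -/

import Mathlib

noncomputable section

open scoped Matrix Kronecker ComplexOrder

/-- The positive semidefinite square root of a matrix (defaults to `0` if not PSD). -/
noncomputable def matSqrt {n : Type*} [Fintype n] [DecidableEq n] (M : Matrix n n ℂ) :
    Matrix n n ℂ :=
  open scoped Classical in
  if h : M.PosSemidef then (h.1.eigenvectorUnitary : Matrix n n ℂ) *
    Matrix.diagonal (((↑) : ℝ → ℂ) ∘ Real.sqrt ∘ h.1.eigenvalues) *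
    (star h.1.eigenvectorUnitary : Matrix n n ℂ) else 0

/-- The fidelity `F(ρ, σ) = tr √(√ρ σ √ρ)` of two PSD matrices. -/
noncomputable def fidelity {n : Type*} [Fintype n] [DecidableEq n] (ρ σ : Matrix n n ℂ) : ℝ :=
  (matSqrt (matSqrt ρ * σ * matSqrt ρ)).trace.re

/-- The ℓ²→ℓ² operator norm of a complex matrix. -/
noncomputable def opNorm {m n : Type*} [Fintype m] [Fintype n] [DecidableEq n]
    (M : Matrix m n ℂ) : ℝ :=
  ‖(Matrix.toEuclideanLin.trans LinearMap.toContinuousLinearMap) M‖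

/-- Partial trace over the second tensor factor. -/
noncomputable def ptraceB {A B : Type*} [Fintype B]
    (ρ : Matrix (A × B) (A × B) ℂ) : Matrix A A ℂ :=
  Matrix.of fun a a' => ∑ b : B, ρ (a, b) (a', b)

namespace AvgTwoUnitariesAux

open scoped Matrix.Norms.L2Operator

variable {n : Type*} [Fintype n] [DecidableEq n]

/-- Key algebraic unitarity lemma. -/
lemma aux_unitary (M V W Q : Matrix n n ℂ) (f g dC : n → ℂ)
    (hV : star V * V = 1) (hVV : V * star V = 1)
    (hW : star W * W = 1)
    (hAV : star M * M * V = V * Matrix.diagonal dC)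
    (hQQ : star Q * Q = Matrix.diagonal g)
    (hMQ : star M * (W * Q) = 0)
    (hfd : ∀ j, star (f j) * dC j * f j + g j = 1) :
    (M * V * Matrix.diagonal f * star V + W * Q * star V) ∈ Matrix.unitaryGroup n ℂ := by
  rw [Matrix.mem_unitaryGroup_iff']
  have hMQ' : star Q * star W * M = 0 := by
    have h := congrArg star hMQ
    simpa [star_mul, Matrix.mul_assoc] using h
  have hAVr : ∀ Z, star M * (M * (V * Z)) = V * (Matrix.diagonal dC * Z) := by
    intro Z
    rw [← Matrix.mul_assoc, ← Matrix.mul_assoc, hAV, Matrix.mul_assoc]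
  have hVr : ∀ Z, star V * (V * Z) = Z := by
    intro Z; rw [← Matrix.mul_assoc, hV, Matrix.one_mul]
  have hWr : ∀ Z, star W * (W * Z) = Z := by
    intro Z; rw [← Matrix.mul_assoc, hW, Matrix.one_mul]
  have hQr : ∀ Z, star Q * (Q * Z) = Matrix.diagonal g * Z := by
    intro Z; rw [← Matrix.mul_assoc, hQQ]
  have hMQr : ∀ Z, star M * (W * (Q * Z)) = 0 := by
    intro Z
    simp only [← Matrix.mul_assoc] at hMQ ⊢
    rw [hMQ, Matrix.zero_mul]
  have hMQ'r : ∀ Z, star Q * (star W * (M * Z)) = 0 := by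
    intro Z
    rw [← Matrix.mul_assoc, ← Matrix.mul_assoc, hMQ', Matrix.zero_mul]
  have hDr : ∀ (a b : n → ℂ) (Z : Matrix n n ℂ),
      Matrix.diagonal a * (Matrix.diagonal b * Z) = Matrix.diagonal (fun j => a j * b j) * Z := by
    intro a b Z
    rw [← Matrix.mul_assoc, Matrix.diagonal_mul_diagonal]
  have hsD : star (Matrix.diagonal f) = Matrix.diagonal (fun j => star (f j)) := by
    simp [Matrix.star_eq_conjTranspose, Matrix.diagonal_conjTranspose]
  simp only [star_add, add_mul, mul_add, star_mul, star_star, Matrix.mul_assoc, hsD]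
  rw [hMQr, hMQ'r, hAVr, hVr, hWr, hQr, hDr, hDr]
  simp only [Matrix.mul_zero, add_zero, zero_add]
  rw [← Matrix.mul_add, ← Matrix.add_mul, Matrix.diagonal_add]
  have : (fun i => star (f i) * dC i * f i + g i) = fun _ => (1 : ℂ) := by
    funext j
    exact hfd j
  rw [this, Matrix.diagonal_one, Matrix.one_mul, hVV]

/-- Partial permutation matrix sending kernel eigenvector indices to kernel indices. -/
def permP (d d' : n → ℝ) (σ : {j // d j = 0} ≃ {k // d' k = 0}) : Matrix n n ℂ :=
  Matrix.of fun k j => if h : d j = 0 then (if k = (σ ⟨j, h⟩ : n) then 1 else 0) else 0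

lemma permP_entry_lemma (d d' : n → ℝ) [DecidablePred fun j => d j = 0]
    (σ : {j // d j = 0} ≃ {k // d' k = 0}) (cf : n → ℂ) :
    star (permP d d' σ) * (Matrix.diagonal cf * permP d d' σ)
      = Matrix.diagonal (fun j => if h : d j = 0 then cf (σ ⟨j, h⟩ : n) else 0) := by
  ext j j'
  rw [Matrix.mul_apply]
  have hDP : ∀ k, (Matrix.diagonal cf * permP d d' σ) k j' = cf k * permP d d' σ k j' := by
    intro k; rw [Matrix.diagonal_mul]
  simp only [hDP, Matrix.star_apply]
  by_cases hj : d j = 0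
  · by_cases hj' : d j' = 0
    · have hterm : ∀ k, star (permP d d' σ k j) * (cf k * permP d d' σ k j')
          = if k = (σ ⟨j', hj'⟩ : n) then (if k = (σ ⟨j, hj⟩ : n) then cf k else 0) else 0 := by
        intro k
        simp only [permP, Matrix.of_apply, dif_pos hj, dif_pos hj']
        by_cases h1 : k = (σ ⟨j, hj⟩ : n) <;> by_cases h2 : k = (σ ⟨j', hj'⟩ : n) <;>
          simp [h1, h2]
      rw [Finset.sum_congr rfl fun k _ => hterm k, Finset.sum_ite_eq' Finset.univ _ _]
      simp only [Finset.mem_univ, if_true]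
      by_cases hjj : j = j'
      · subst hjj
        simp [Matrix.diagonal_apply_eq, dif_pos hj]
      · have hne : ((σ ⟨j', hj'⟩ : n)) ≠ ((σ ⟨j, hj⟩ : n)) := fun h =>
          hjj (congrArg Subtype.val (σ.injective (Subtype.ext h))).symm
        rw [if_neg hne, Matrix.diagonal_apply_ne _ hjj]
    · have hterm : ∀ k, star (permP d d' σ k j) * (cf k * permP d d' σ k j') = 0 := by
        intro k; simp [permP, dif_neg hj']
      rw [Finset.sum_congr rfl fun k _ => hterm k, Finset.sum_const_zero]
      have hjj : j ≠ j' := fun h => hj' (h ▸ hj)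
      rw [Matrix.diagonal_apply_ne _ hjj]
  · have hterm : ∀ k, star (permP d d' σ k j) * (cf k * permP d d' σ k j') = 0 := by
      intro k; simp [permP, dif_neg hj]
    rw [Finset.sum_congr rfl fun k _ => hterm k, Finset.sum_const_zero]
    by_cases hjj : j = j'
    · subst hjj; rw [Matrix.diagonal_apply_eq]; simp [dif_neg hj]
    · rw [Matrix.diagonal_apply_ne _ hjj]

end AvgTwoUnitariesAux

open scoped Matrix.Norms.L2Operator in
/-- **Lemma (subnormalized matrices are averages of two unitaries)**. -/
theorem subnormalized_avg_of_two_unitaries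
    {n : Type*} [Fintype n] [DecidableEq n]
    (M : Matrix n n ℂ) (hM : opNorm M ≤ 1) :
    ∃ U₁ U₂ : Matrix n n ℂ,
      U₁ ∈ Matrix.unitaryGroup n ℂ ∧ U₂ ∈ Matrix.unitaryGroup n ℂ ∧
      M = ((1 : ℂ) / 2) • (U₁ + U₂) := by
  classical
  obtain hn | hn := isEmpty_or_nonempty n
  · refine ⟨1, 1, one_mem _, one_mem _, ?_⟩
    ext i j
    exact hn.elim i
  have hM1 : ‖M‖ ≤ 1 := hM
  have hA : (Mᴴ * M).PosSemidef := Matrix.posSemidef_conjTranspose_mul_self M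
  have hB : (M * Mᴴ).PosSemidef := Matrix.posSemidef_self_mul_conjTranspose M
  set d : n → ℝ := hA.1.eigenvalues with hd_def
  set d' : n → ℝ := hB.1.eigenvalues with hd'_def
  set dC : n → ℂ := RCLike.ofReal ∘ d with hdC_def
  set d'C : n → ℂ := RCLike.ofReal ∘ d' with hd'C_def
  set V : Matrix n n ℂ := (hA.1.eigenvectorUnitary : Matrix n n ℂ) with hV_def
  set W : Matrix n n ℂ := (hB.1.eigenvectorUnitary : Matrix n n ℂ) with hW_def
  have hVmem : V ∈ Matrix.unitaryGroup n ℂ := (hA.1.eigenvectorUnitary).2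
  have hWmem : W ∈ Matrix.unitaryGroup n ℂ := (hB.1.eigenvectorUnitary).2
  have hVsV : star V * V = 1 := Matrix.mem_unitaryGroup_iff'.mp hVmem
  have hVVs : V * star V = 1 := Matrix.mem_unitaryGroup_iff.mp hVmem
  have hWsW : star W * W = 1 := Matrix.mem_unitaryGroup_iff'.mp hWmem
  -- eigenvalue bounds
  have hd0 : ∀ i, 0 ≤ d i := hA.eigenvalues_nonneg
  haveI : NormOneClass (Matrix n n ℂ) := ⟨by
    rw [Matrix.cstar_norm_def, map_one]; exact norm_one⟩
  have hd1 : ∀ i, d i ≤ 1 := by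
    intro i
    have hv := hA.1.mulVec_eigenvectorBasis i
    have hne : hA.1.eigenvectorBasis i ≠ 0 := hA.1.eigenvectorBasis.orthonormal.ne_zero i
    have hv' : Matrix.toEuclideanLin (Mᴴ * M) (hA.1.eigenvectorBasis i)
        = ((d i : ℂ)) • hA.1.eigenvectorBasis i := by
      ext j
      simpa [Matrix.toEuclideanLin_apply] using congrFun hv j
    have hmem : ((d i : ℂ)) ∈ spectrum ℂ (Mᴴ * M) := by
      rw [← Matrix.spectrum_toEuclideanLin (𝕜 := ℂ) (A := Mᴴ * M)]
      exact Module.End.HasEigenvalue.mem_spectrum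
        (Module.End.hasEigenvalue_of_hasEigenvector
          ⟨Module.End.mem_eigenspace_iff.2 hv', hne⟩)
    have hb := spectrum.norm_le_norm_of_mem hmem
    have hAn : ‖Mᴴ * M‖ ≤ 1 := by
      rw [Matrix.l2_opNorm_conjTranspose_mul_self]
      nlinarith [norm_nonneg M]
    calc d i ≤ |d i| := le_abs_self _
      _ = ‖((d i : ℂ))‖ := by rw [Complex.norm_real, Real.norm_eq_abs]
      _ ≤ ‖Mᴴ * M‖ := hb
      _ ≤ 1 := hAn
  -- spectral identities
  have hAV : star M * M * V = V * Matrix.diagonal dC := by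
    have h : Mᴴ * M = V * Matrix.diagonal dC * star V := hA.1.spectral_theorem
    rw [Matrix.star_eq_conjTranspose, h, Matrix.mul_assoc (V * Matrix.diagonal dC) (star V) V,
      hVsV, Matrix.mul_one]
  have hBW : M * star M * W = W * Matrix.diagonal d'C := by
    have h : M * Mᴴ = W * Matrix.diagonal d'C * star W := hB.1.spectral_theorem
    rw [← Matrix.star_eq_conjTranspose] at h
    rw [h, Matrix.mul_assoc (W * Matrix.diagonal d'C) (star W) W, hWsW, Matrix.mul_one]
  -- the partial permutation matrix matching kernels
  have hcard : Fintype.card {j // d j = 0} = Fintype.card {k // d' k = 0} := by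
    have h1 : (Mᴴ * M).rank = Fintype.card {i // d i ≠ 0} := hA.1.rank_eq_card_non_zero_eigs
    have h2 : (M * Mᴴ).rank = Fintype.card {i // d' i ≠ 0} := hB.1.rank_eq_card_non_zero_eigs
    have h3 : (Mᴴ * M).rank = (M * Mᴴ).rank := by
      rw [Matrix.rank_conjTranspose_mul_self, Matrix.rank_self_mul_conjTranspose]
    have e1 : Fintype.card {j // d j = 0}
        = Fintype.card n - Fintype.card {i // d i ≠ 0} := by
      rw [← Fintype.card_subtype_compl (p := fun i => d i ≠ 0)]
      exact Fintype.card_congr (Equiv.subtypeEquivRight fun _ => not_not.symm)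
    have e2 : Fintype.card {j // d' j = 0}
        = Fintype.card n - Fintype.card {i // d' i ≠ 0} := by
      rw [← Fintype.card_subtype_compl (p := fun i => d' i ≠ 0)]
      exact Fintype.card_congr (Equiv.subtypeEquivRight fun _ => not_not.symm)
    rw [e1, e2, ← h1, ← h2, h3]
  set σ : {j // d j = 0} ≃ {k // d' k = 0} := Fintype.equivOfCardEq hcard with hσ_def
  set P : Matrix n n ℂ := AvgTwoUnitariesAux.permP d d' σ with hP_def
  have hPdP := fun cf => AvgTwoUnitariesAux.permP_entry_lemma d d' σ cf
  set g : n → ℂ := fun j => if d j = 0 then 1 else 0 with hg_def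
  have hPP : star P * P = Matrix.diagonal g := by
    calc star P * P = star P * (1 * P) := by rw [Matrix.one_mul]
      _ = star P * (Matrix.diagonal (fun _ : n => (1 : ℂ)) * P) := by rw [Matrix.diagonal_one]
      _ = Matrix.diagonal (fun j => if h : d j = 0 then (1 : ℂ) else 0) := hPdP _
      _ = Matrix.diagonal g := by
          congr 1
  have hVr : ∀ Z, star V * (V * Z) = Z := by
    intro Z; rw [← Matrix.mul_assoc, hVsV, Matrix.one_mul]
  have hWr : ∀ Z, star W * (W * Z) = Z := by
    intro Z; rw [← Matrix.mul_assoc, hWsW, Matrix.one_mul]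
  have hAVr : ∀ Z, star M * (M * (V * Z)) = V * (Matrix.diagonal dC * Z) := by
    intro Z
    rw [← Matrix.mul_assoc, ← Matrix.mul_assoc, hAV, Matrix.mul_assoc]
  have hBWr : ∀ Z, M * (star M * (W * Z)) = W * (Matrix.diagonal d'C * Z) := by
    intro Z
    rw [← Matrix.mul_assoc, ← Matrix.mul_assoc, hBW, Matrix.mul_assoc]
  have hMWP : star M * (W * P) = 0 := by
    rw [← Matrix.conjTranspose_mul_self_eq_zero]
    have hct : (star M * (W * P))ᴴ = star P * (star W * M) := by
      simp [Matrix.conjTranspose_mul, ← Matrix.star_eq_conjTranspose, star_mul,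
        Matrix.mul_assoc]
    rw [hct]
    have : star P * (star W * M) * (star M * (W * P))
        = star P * (Matrix.diagonal d'C * P) := by
      simp only [Matrix.mul_assoc]
      rw [hBWr, hWr]
    rw [this, hPdP d'C]
    have : (fun j => if h : d j = 0 then d'C (σ ⟨j, h⟩ : n) else 0) = fun _ => (0 : ℂ) := by
      funext j
      by_cases hj : d j = 0
      · rw [dif_pos hj]
        have h0 : d' ((σ ⟨j, hj⟩ : {k // d' k = 0}) : n) = 0 := (σ ⟨j, hj⟩).2
        simp [hd'C_def, h0]
      · rw [dif_neg hj]
    rw [this, Matrix.diagonal_zero]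
  -- the diagonal phase function
  set e : n → ℂ := fun j => if d j = 0 then 0
    else ((Real.sqrt (d j) : ℂ) + Complex.I * (Real.sqrt (1 - d j) : ℂ)) / (Real.sqrt (d j) : ℂ)
    with he_def
  have hstar_e : ∀ j, d j ≠ 0 → star (e j)
      = ((Real.sqrt (d j) : ℂ) - Complex.I * (Real.sqrt (1 - d j) : ℂ)) / (Real.sqrt (d j) : ℂ) := by
    intro j hj
    simp only [he_def, if_neg hj]
    rw [star_div₀, star_add]
    simp [Complex.star_def, Complex.conj_ofReal, sub_eq_add_neg]
  have hsqrt : ∀ j, d j ≠ 0 →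
      ((Real.sqrt (d j) : ℂ) ≠ 0 ∧
      ((Real.sqrt (d j) : ℂ)) * ((Real.sqrt (d j) : ℂ)) = (d j : ℂ) ∧
      ((Real.sqrt (1 - d j) : ℂ)) * ((Real.sqrt (1 - d j) : ℂ)) = 1 - (d j : ℂ)) := by
    intro j hj
    have hdpos : 0 < d j := lt_of_le_of_ne (hd0 j) (Ne.symm hj)
    refine ⟨?_, ?_, ?_⟩
    · exact_mod_cast Real.sqrt_ne_zero'.2 hdpos
    · rw [← Complex.ofReal_mul, Real.mul_self_sqrt (hd0 j)]
    · rw [← Complex.ofReal_mul, Real.mul_self_sqrt (by linarith [hd1 j])]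
      push_cast; ring
  have hfd1 : ∀ j, star (e j) * dC j * e j + g j = 1 := by
    intro j
    by_cases hj : d j = 0
    · simp [he_def, hg_def, hj]
    · obtain ⟨hs, hs2, ht2⟩ := hsqrt j hj
      rw [hstar_e j hj]
      simp only [he_def, hg_def, if_neg hj, add_zero]
      have hdd : dC j = (d j : ℂ) := rfl
      rw [hdd, ← hs2]
      field_simp
      linear_combination ht2
        - ((Real.sqrt (1 - d j) : ℂ))^2 * Complex.I_sq
        + hs2
  have hfd2 : ∀ j, star (star (e j)) * dC j * star (e j) + g j = 1 := by
    intro j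
    rw [star_star]
    linear_combination hfd1 j
  have hQQ2 : star (-P) * (-P) = Matrix.diagonal g := by
    rw [star_neg, Matrix.neg_mul, Matrix.mul_neg, neg_neg, hPP]
  have hMQ2 : star M * (W * (-P)) = 0 := by
    rw [Matrix.mul_neg, Matrix.mul_neg, hMWP, neg_zero]
  refine ⟨M * V * Matrix.diagonal e * star V + W * P * star V,
    M * V * Matrix.diagonal (fun j => star (e j)) * star V + W * (-P) * star V,
    AvgTwoUnitariesAux.aux_unitary M V W P e g dC hVsV hVVs hWsW hAV hPP hMWP hfd1,
    AvgTwoUnitariesAux.aux_unitary M V W (-P) (fun j => star (e j)) g dC hVsV hVVs hWsW hAV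
      hQQ2 hMQ2 hfd2, ?_⟩
  -- the sum is 2 M
  have hMg : M * V * Matrix.diagonal g = 0 := by
    rw [← Matrix.conjTranspose_mul_self_eq_zero]
    have hsDg : star (Matrix.diagonal g) = Matrix.diagonal (fun j => star (g j)) := by
      simp [Matrix.star_eq_conjTranspose, Matrix.diagonal_conjTranspose]
    have hct : (M * V * Matrix.diagonal g)ᴴ
        = Matrix.diagonal (fun j => star (g j)) * (star V * star M) := by
      rw [← Matrix.star_eq_conjTranspose]
      simp only [star_mul, Matrix.mul_assoc, hsDg]
    rw [hct]
    have : Matrix.diagonal (fun j => star (g j)) * (star V * star M)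
        * (M * V * Matrix.diagonal g)
        = Matrix.diagonal (fun j => star (g j)) * (Matrix.diagonal dC * Matrix.diagonal g) := by
      simp only [Matrix.mul_assoc]
      rw [hAVr, hVr]
    rw [this, Matrix.diagonal_mul_diagonal, Matrix.diagonal_mul_diagonal]
    have : (fun j => star (g j) * (dC j * g j)) = fun _ => (0 : ℂ) := by
      funext j
      by_cases hj : d j = 0
      · have : dC j = 0 := by simp [hdC_def, hj]
        simp [this]
      · simp [hg_def, hj]
    rw [this, Matrix.diagonal_zero]
  have hWnegP : W * (-P) * star V = -(W * P * star V) := by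
    rw [Matrix.mul_neg, Matrix.neg_mul]
  rw [hWnegP]
  have hsum : M * V * Matrix.diagonal e * star V + W * P * star V
      + (M * V * Matrix.diagonal (fun j => star (e j)) * star V + -(W * P * star V))
      = M * V * (Matrix.diagonal e + Matrix.diagonal (fun j => star (e j))) * star V := by
    rw [Matrix.mul_add, Matrix.add_mul]
    abel
  rw [hsum]
  have hee : Matrix.diagonal e + Matrix.diagonal (fun j => star (e j))
      = (2 : ℂ) • (1 : Matrix n n ℂ) - (2 : ℂ) • Matrix.diagonal g := by
    rw [Matrix.diagonal_add]
    have hptwise : (fun j => e j + star (e j)) = fun j => 2 - 2 * g j := by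
      funext j
      by_cases hj : d j = 0
      · simp [he_def, hg_def, hj]
      · obtain ⟨hs, hs2, ht2⟩ := hsqrt j hj
        rw [hstar_e j hj]
        simp only [he_def, hg_def, if_neg hj, mul_zero, sub_zero]
        field_simp
        ring
    rw [hptwise]
    ext i j
    by_cases hij : i = j
    · subst hij
      simp [Matrix.diagonal_apply_eq, Matrix.one_apply_eq]
    · simp [Matrix.diagonal_apply_ne _ hij, Matrix.one_apply_ne hij]
  rw [hee]
  have h2 : M * V * ((2 : ℂ) • (1 : Matrix n n ℂ) - (2 : ℂ) • Matrix.diagonal g) * star V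
      = (2 : ℂ) • M := by
    rw [Matrix.mul_sub, Matrix.sub_mul, mul_smul_comm, Matrix.mul_one, mul_smul_comm,
      smul_mul_assoc, smul_mul_assoc, hMg, Matrix.zero_mul, smul_zero, sub_zero,
      Matrix.mul_assoc, hVVs, Matrix.mul_one]
  rw [h2, smul_smul]
  norm_num
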